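/- Let g : ℝ → ℝ be defined by g(c) = ∫_S e^{h(x)+c} f(e^{h(x)+c}) dσ(x) where h : S → ℝ is measurable with e^h integrable, S has finite measure |S|, and f satisfies: s ↦ s f(s) is continuous, nondecreasing, strictly increasing where it takes values in (0,1), with s f(s) → 0 as s → 0⁺ and s f(s) → 1 as s → ∞. Then g is continuous, nondecreasing, lim_{c→-∞} g(c) = 0, lim_{c→∞} g(c) = |S|, and for every t ∈ (0, |S|), if s f(s) is strictly increasing then there is a unique c with g(c) = t. -/

import Mathlib

open MeasureTheory Filter

/-- Properties of `g c = ∫_S e^{h+c} f(e^{h+c}) dσ`: `g` is continuous and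
nondecreasing, `g → 0` at `-∞`, `g → |S|` at `+∞`, and for every
`t ∈ (0, |S|)` there is a unique `c` with `g c = t` (using strict
monotonicity of `s ↦ s f s`). -/
theorem stmt9 {S : Type*} [MeasurableSpace S] (μ : Measure S) [IsFiniteMeasure μ]
    (h : S → ℝ) (hmeas : Measurable h)
    (hint : Integrable (fun x => Real.exp (h x)) μ)
    (f : ℝ → ℝ)
    (hcont : ContinuousOn (fun s => s * f s) (Set.Ioi (0 : ℝ)))
    (hmono : StrictMonoOn (fun s => s * f s) (Set.Ioi (0 : ℝ)))
    (hbd : ∀ s : ℝ, 0 < s → 0 ≤ s * f s ∧ s * f s ≤ 1)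
    (hlim0 : Filter.Tendsto (fun s => s * f s) (nhdsWithin 0 (Set.Ioi 0)) (nhds 0))
    (hlim1 : Filter.Tendsto (fun s => s * f s) Filter.atTop (nhds 1))
    (g : ℝ → ℝ)
    (hg : ∀ c : ℝ,
      g c = ∫ x, Real.exp (h x + c) * f (Real.exp (h x + c)) ∂μ) :
    Continuous g ∧ Monotone g ∧
    Filter.Tendsto g Filter.atBot (nhds 0) ∧
    Filter.Tendsto g Filter.atTop (nhds (μ Set.univ).toReal) ∧
    ∀ t ∈ Set.Ioo (0 : ℝ) (μ Set.univ).toReal, ∃! c : ℝ, g c = t := by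
  set Φ : ℝ → ℝ := fun u => Real.exp u * f (Real.exp u) with hΦdef
  have hΦc : Continuous Φ :=
    hcont.comp_continuous Real.continuous_exp (fun u => Set.mem_Ioi.2 (Real.exp_pos u))
  have hΦm : StrictMono Φ := fun a b hab =>
    hmono (Set.mem_Ioi.2 (Real.exp_pos a)) (Set.mem_Ioi.2 (Real.exp_pos b))
      (Real.exp_lt_exp.2 hab)
  have hΦbd : ∀ u, 0 ≤ Φ u ∧ Φ u ≤ 1 := fun u => hbd _ (Real.exp_pos u)
  have hΦ0 : Tendsto Φ atBot (nhds 0) := by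
    apply hlim0.comp
    refine tendsto_nhdsWithin_of_tendsto_nhds_of_eventually_within _ Real.tendsto_exp_atBot ?_
    exact Eventually.of_forall fun u => Set.mem_Ioi.2 (Real.exp_pos u)
  have hΦ1 : Tendsto Φ atTop (nhds 1) := hlim1.comp Real.tendsto_exp_atTop
  have hmeasF : ∀ c : ℝ, Measurable fun x => Φ (h x + c) :=
    fun c => hΦc.measurable.comp (hmeas.add_const c)
  have hintF : ∀ c : ℝ, Integrable (fun x => Φ (h x + c)) μ := by
    intro c
    refine (integrable_const (1 : ℝ)).mono' (hmeasF c).aestronglyMeasurable ?_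
    refine Eventually.of_forall fun x => ?_
    rw [Real.norm_eq_abs, abs_of_nonneg (hΦbd _).1]
    exact (hΦbd _).2
  have hgeq : g = fun c => ∫ x, Φ (h x + c) ∂μ := funext hg
  have hGc : Continuous g := by
    rw [hgeq]
    refine continuous_of_dominated (fun c => (hmeasF c).aestronglyMeasurable)
      (fun c => Eventually.of_forall fun x => ?_) (integrable_const (1 : ℝ))
      (Eventually.of_forall fun x => ?_)
    · rw [Real.norm_eq_abs, abs_of_nonneg (hΦbd _).1]; exact (hΦbd _).2
    · exact hΦc.comp (continuous_const.add continuous_id)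
  have hGm : Monotone g := by
    intro c₁ c₂ hle
    rw [hg c₁, hg c₂]
    exact integral_mono (hintF c₁) (hintF c₂) fun x => hΦm.monotone (by linarith)
  have hGbot : Tendsto g atBot (nhds 0) := by
    rw [hgeq]
    have key : Tendsto (fun c => ∫ x, Φ (h x + c) ∂μ) atBot (nhds (∫ _x, (0 : ℝ) ∂μ)) := by
      refine tendsto_integral_filter_of_dominated_convergence (fun _ => (1 : ℝ))
        (Eventually.of_forall fun c => (hmeasF c).aestronglyMeasurable)
        (Eventually.of_forall fun c => Eventually.of_forall fun x => ?_)
        (integrable_const 1) (Eventually.of_forall fun x => ?_)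
      · rw [Real.norm_eq_abs, abs_of_nonneg (hΦbd _).1]; exact (hΦbd _).2
      · exact hΦ0.comp (tendsto_atBot_add_const_left _ _ tendsto_id)
    simpa using key
  have hGtop : Tendsto g atTop (nhds (μ Set.univ).toReal) := by
    rw [hgeq]
    have key : Tendsto (fun c => ∫ x, Φ (h x + c) ∂μ) atTop (nhds (∫ _x, (1 : ℝ) ∂μ)) := by
      refine tendsto_integral_filter_of_dominated_convergence (fun _ => (1 : ℝ))
        (Eventually.of_forall fun c => (hmeasF c).aestronglyMeasurable)
        (Eventually.of_forall fun c => Eventually.of_forall fun x => ?_)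
        (integrable_const 1) (Eventually.of_forall fun x => ?_)
      · rw [Real.norm_eq_abs, abs_of_nonneg (hΦbd _).1]; exact (hΦbd _).2
      · exact hΦ1.comp (tendsto_atTop_add_const_left _ _ tendsto_id)
    simpa [measureReal_def] using key
  refine ⟨hGc, hGm, hGbot, hGtop, ?_⟩
  rintro t ⟨ht0, htS⟩
  have hμpos : 0 < μ Set.univ := by
    rcases eq_zero_or_pos (μ Set.univ) with h0 | h0
    · rw [h0] at htS; simp at htS; linarith
    · exact h0
  -- g strictly monotone
  have hGsm : StrictMono g := by
    intro c₁ c₂ hlt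
    have hsub : g c₂ - g c₁ = ∫ x, (Φ (h x + c₂) - Φ (h x + c₁)) ∂μ := by
      rw [hg c₁, hg c₂, integral_sub (hintF c₂) (hintF c₁)]
    have hpos : 0 < ∫ x, (Φ (h x + c₂) - Φ (h x + c₁)) ∂μ := by
      rw [integral_pos_iff_support_of_nonneg
        (fun x => sub_nonneg.2 (hΦm.monotone (by linarith)))
        ((hintF c₂).sub (hintF c₁))]
      have : Function.support (fun x => Φ (h x + c₂) - Φ (h x + c₁)) = Set.univ := by
        ext x
        simp only [Function.mem_support, Set.mem_univ, iff_true]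
        exact ne_of_gt (sub_pos.2 (hΦm (by linarith)))
      rw [this]
      exact hμpos
    linarith
  -- existence via IVT
  have hA : ∃ a, g a < t := by
    have := hGbot.eventually (eventually_lt_nhds ht0)
    exact this.exists
  have hB : ∃ b, t < g b := by
    have := hGtop.eventually (eventually_gt_nhds htS)
    exact this.exists
  obtain ⟨a, ha⟩ := hA
  obtain ⟨b, hb⟩ := hB
  have hab : a ≤ b := by
    by_contra hc
    push_neg at hc
    exact absurd (hGm hc.le) (not_le.2 (by linarith))
  have : t ∈ Set.Icc (g a) (g b) := ⟨ha.le, hb.le⟩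
  obtain ⟨c, _, hc⟩ := intermediate_value_Icc hab hGc.continuousOn this
  exact ⟨c, hc, fun c' hc' => hGsm.injective (hc'.trans hc.symm)⟩
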